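/- Let p, q be coprime positive integers with q odd, and k a positive integer, and let Λ_{k,q,2} = (1/(2k))ℤ × ℤ⁴ × πqℤ, a lattice of Osc₂(1, p/q). Then the normalizer of Λ_{k,q,2} in Osc₂(1, p/q) is: N(Λ_{k,q,2}) = ℝ × (1/2)ℤ² × (1/(2k))ℤ² × (qπ/2)ℤ if p is even, and N(Λ_{k,q,2}) = ℝ × (1/2)ℤ⁴ × (qπ/2)ℤ if p is odd. That is, g = (z, (v₁,v₂,v₃,v₄), t) normalizes Λ_{k,q,2} if and only if t ∈ (qπ/2)ℤ, (v₁,v₂) ∈ (1/2)ℤ², and (v₃,v₄) ∈ (1/(2k))ℤ² when p is even, respectively (v₃,v₄) ∈ (1/2)ℤ² when p is odd. -/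

import Mathlib

open Real

noncomputable section

/-- rotation by angle `θ` acting on `ℝ × ℝ` -/
def rot (θ : ℝ) (p : ℝ × ℝ) : ℝ × ℝ :=
  (Real.cos θ * p.1 - Real.sin θ * p.2, Real.sin θ * p.1 + Real.cos θ * p.2)

/-- the matrix `[[0,1],[-1,0]]` acting on `ℝ × ℝ` -/
def Jpair (p : ℝ × ℝ) : ℝ × ℝ := (p.2, -p.1)

/-- euclidean inner product on `ℝ × ℝ` -/
def dot2 (p q : ℝ × ℝ) : ℝ := p.1 * q.1 + p.2 * q.2

/-- underlying set `ℝ × ℝ^{2n} × ℝ` of the oscillator group, where the middle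
factor `ℝ^{2n}` is recorded as `n` pairs `(x_i, y_i)`. -/
abbrev OscG (n : ℕ) := ℝ × (Fin n → ℝ × ℝ) × ℝ

/-- multiplication of the oscillator group `Osc_n(λ₁,…,λₙ)`:
`(z₁,v₁,t₁)·(z₂,v₂,t₂) = (z₁+z₂+½ v₁ᵀ J R(t₁) v₂, v₁ + R(t₁)v₂, t₁+t₂)`,
where `R(t)` rotates the `i`-th pair by the angle `λ_i t`. -/
def oscMul {n : ℕ} (lam : Fin n → ℝ) (g h : OscG n) : OscG n :=
  (g.1 + h.1 + (1/2) * ∑ i, dot2 (g.2.1 i) (Jpair (rot (lam i * g.2.2) (h.2.1 i))),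
   fun i => g.2.1 i + rot (lam i * g.2.2) (h.2.1 i),
   g.2.2 + h.2.2)

/-- identity element of the oscillator group -/
def oscOne (n : ℕ) : OscG n := (0, fun _ => (0, 0), 0)

/-- inverse in the oscillator group: `(z,v,t)⁻¹ = (-z, -R(-t)v, -t)` -/
def oscInv {n : ℕ} (lam : Fin n → ℝ) (g : OscG n) : OscG n :=
  (-g.1, fun i => -(rot (lam i * (-g.2.2)) (g.2.1 i)), -g.2.2)

/-- `Γ` is a lattice of the oscillator group: a discrete subgroup with compact
quotient (the quotient by the right multiplication action of `Γ`). -/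
structure IsLattice {n : ℕ} (lam : Fin n → ℝ) (Γ : Set (OscG n)) : Prop where
  one_mem : oscOne n ∈ Γ
  mul_mem : ∀ g ∈ Γ, ∀ h ∈ Γ, oscMul lam g h ∈ Γ
  inv_mem : ∀ g ∈ Γ, oscInv lam g ∈ Γ
  discrete : DiscreteTopology Γ
  cocompact : CompactSpace (Quot (fun g h : OscG n => ∃ γ ∈ Γ, h = oscMul lam g γ))

/-- `Q(X) = 2ad + Σ_k (b_k² + c_k²)/λ_k` for `X = (d,(b₁,c₁,…,bₙ,cₙ),a)` -/
def Qform {n : ℕ} (lam : Fin n → ℝ) (d a : ℝ) (b c : Fin n → ℝ) : ℝ :=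
  2 * a * d + ∑ k, (b k ^ 2 + c k ^ 2) / lam k

/-- the geodesic through the identity with initial velocity
`X = (d,(b₁,c₁,…,bₙ,cₙ),a)` for the bi-invariant Lorentzian metric on the
oscillator group. -/
def geo {n : ℕ} (lam : Fin n → ℝ) (d : ℝ) (b c : Fin n → ℝ) (a : ℝ) (s : ℝ) : OscG n :=
  if a = 0 then (d * s, fun j => (b j * s, c j * s), 0)
  else
    ((d + (1/(2*a)) * ∑ k, (b k ^ 2 + c k ^ 2) / lam k) * s
        - (1/(2*a^2)) * ∑ k, ((b k ^ 2 + c k ^ 2) / (lam k)^2) * Real.sin (lam k * a * s),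
     fun j => ((1/(a * lam j)) * (b j * Real.sin (lam j * a * s)
                  + c j * Real.cos (lam j * a * s) - c j),
               (1/(a * lam j)) * (-(b j) * Real.cos (lam j * a * s)
                  + c j * Real.sin (lam j * a * s) + b j)),
     a * s)

/-- the frequencies `(1, p/q)` of the oscillator group `Osc₂(1, p/q)` -/
def lam2 (p q : ℕ) : Fin 2 → ℝ := ![1, (p : ℝ) / q]

/-- the set `(1/(2k))ℤ × ℤ⁴ × Tℤ ⊆ Osc₂(1, p/q)` -/
def LamO2 (k : ℕ) (T : ℝ) : Set (OscG 2) :=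
  {g | (∃ m : ℤ, g.1 = m / (2 * k))
    ∧ (∀ i : Fin 2, (∃ a : ℤ, (g.2.1 i).1 = a) ∧ (∃ b : ℤ, (g.2.1 i).2 = b))
    ∧ ∃ c : ℤ, g.2.2 = c * T}

/-- conjugation `γ ↦ g γ g⁻¹` in the oscillator group -/
def oscConj {n : ℕ} (lam : Fin n → ℝ) (g : OscG n) : OscG n → OscG n :=
  fun γ => oscMul lam (oscMul lam g γ) (oscInv lam g)

section Helpers

lemma rot_rot (a b : ℝ) (x : ℝ × ℝ) : rot a (rot b x) = rot (a + b) x := by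
  simp only [rot, Real.cos_add, Real.sin_add]
  exact Prod.ext (by ring) (by ring)

lemma rot_zero (x : ℝ × ℝ) : rot 0 x = x := by
  simp [rot]

lemma rot_neg_vec (a : ℝ) (x : ℝ × ℝ) : rot a (-x) = -(rot a x) := by
  simp only [rot, Prod.fst_neg, Prod.snd_neg, Prod.neg_mk]
  exact Prod.ext (by ring) (by ring)

/-- closed formula for conjugation in `Osc₂` -/
lemma oscConj_eq (lam : Fin 2 → ℝ) (g γ : OscG 2) :
    oscConj lam g γ =
      (γ.1 + (1/2) * ∑ i, (dot2 (g.2.1 i) (Jpair (rot (lam i * g.2.2) (γ.2.1 i)))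
          - dot2 (g.2.1 i + rot (lam i * g.2.2) (γ.2.1 i)) (Jpair (rot (lam i * γ.2.2) (g.2.1 i)))),
       fun i => g.2.1 i + rot (lam i * g.2.2) (γ.2.1 i) - rot (lam i * γ.2.2) (g.2.1 i),
       γ.2.2) := by
  obtain ⟨z, v, t⟩ := g
  obtain ⟨w, u, s⟩ := γ
  have hkey : ∀ i : Fin 2, ∀ x : ℝ × ℝ,
      rot (lam i * (t + s)) (-(rot (lam i * -t) x)) = -(rot (lam i * s) x) := by
    intro i x
    rw [rot_neg_vec, rot_rot, show lam i * (t + s) + lam i * -t = lam i * s by ring]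
  simp only [oscConj, oscMul, oscInv]
  refine Prod.ext ?_ (Prod.ext ?_ ?_)
  · simp only [hkey]
    simp only [Jpair, Prod.fst_neg, Prod.snd_neg, dot2, Fin.sum_univ_two]
    ring
  · funext i
    simp only [hkey]
    exact Prod.ext (by simp [rot, Jpair, dot2]; try ring) (by simp [rot, Jpair, dot2]; try ring)
  · ring

end Helpers
section Helpers2

open Real

lemma cs_int (n : ℤ) : ∃ c s : ℤ, Real.cos ((n : ℝ) * (π/2)) = c ∧ Real.sin ((n : ℝ) * (π/2)) = s := by
  have hmod : n % 4 + 4 * (n / 4) = n := Int.emod_add_mul_ediv n 4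
  have hcast : (↑(n % 4) : ℝ) + 4 * (↑(n / 4) : ℝ) = (n : ℝ) := by exact_mod_cast congrArg (fun z : ℤ => (z : ℝ)) hmod
  have hn : (n : ℝ) * (π/2) = (↑(n % 4) : ℝ) * (π/2) + (n / 4 : ℤ) * (2 * π) := by
    rw [← hcast]; ring
  rw [hn, Real.cos_add_int_mul_two_pi, Real.sin_add_int_mul_two_pi]
  have h1 : 0 ≤ n % 4 := Int.emod_nonneg n (by norm_num)
  have h2 : n % 4 < 4 := Int.emod_lt_of_pos n (by norm_num)
  have : n % 4 = 0 ∨ n % 4 = 1 ∨ n % 4 = 2 ∨ n % 4 = 3 := by omega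
  rcases this with h | h | h | h <;> rw [h]
  · exact ⟨1, 0, by norm_num⟩
  · exact ⟨0, 1, by norm_num⟩
  · refine ⟨-1, 0, ?_, ?_⟩
    · rw [show ((2:ℤ):ℝ) * (π/2) = π by push_cast; ring, Real.cos_pi]; norm_num
    · rw [show ((2:ℤ):ℝ) * (π/2) = π by push_cast; ring, Real.sin_pi]; norm_num
  · refine ⟨0, -1, ?_, ?_⟩
    · rw [show ((3:ℤ):ℝ) * (π/2) = π + π/2 by push_cast; ring, Real.cos_add]; norm_num
    · rw [show ((3:ℤ):ℝ) * (π/2) = π + π/2 by push_cast; ring, Real.sin_add]; norm_num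

lemma eq_int_mul_pi_div_two {θ : ℝ} (a b : ℤ) (hc : Real.cos θ = a) (hs : Real.sin θ = b) :
    ∃ m : ℤ, θ = m * (π/2) := by
  have h1 : (a:ℝ)^2 + (b:ℝ)^2 = 1 := by rw [← hc, ← hs]; exact Real.cos_sq_add_sin_sq θ
  have h1' : a^2 + b^2 = 1 := by exact_mod_cast h1
  have hab : a = 0 ∨ b = 0 := by
    by_contra h
    push_neg at h
    have ha : 1 ≤ a^2 := by nlinarith [Int.one_le_abs h.1, sq_abs a, abs_nonneg a]
    have hb : 1 ≤ b^2 := by nlinarith [Int.one_le_abs h.2, sq_abs b, abs_nonneg b]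
    omega
  rcases hab with h0 | h0
  · have : Real.cos θ = 0 := by rw [hc, h0]; norm_num
    obtain ⟨n, hn⟩ := Real.cos_eq_zero_iff.mp this
    exact ⟨2*n + 1, by rw [hn]; push_cast; ring⟩
  · have : Real.sin θ = 0 := by rw [hs, h0]; norm_num
    obtain ⟨n, hn⟩ := Real.sin_eq_zero_iff.mp this
    exact ⟨2*n, by rw [← hn]; push_cast; ring⟩

/-- rotation with integer cosine/sine matrix entries preserves `m/d` lattices -/
lemma rot_div {θ : ℝ} {c s : ℤ} (hc : Real.cos θ = c) (hs : Real.sin θ = s) (d : ℝ) (a b : ℤ) :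
    rot θ ((a:ℝ)/d, (b:ℝ)/d) = ((↑(c*a - s*b) : ℝ)/d, (↑(s*a + c*b) : ℝ)/d) := by
  simp only [rot, hc, hs]
  push_cast
  exact Prod.ext (by ring) (by ring)

lemma rot_int {θ : ℝ} {c s : ℤ} (hc : Real.cos θ = c) (hs : Real.sin θ = s) (a b : ℤ) :
    rot θ ((a:ℝ), (b:ℝ)) = ((↑(c*a - s*b) : ℝ), (↑(s*a + c*b) : ℝ)) := by
  simp only [rot, hc, hs]
  push_cast
  exact Prod.ext (by ring) (by ring)

/-- for integer `n`, `sin (n π) = 0` and `cos (n π) = ±1` -/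
lemma eps_pi (n : ℤ) : Real.sin ((n:ℝ) * π) = 0 ∧
    (Real.cos ((n:ℝ) * π) = 1 ∨ Real.cos ((n:ℝ) * π) = -1) :=
  ⟨Real.sin_int_mul_pi n, Real.sin_eq_zero_iff_cos_eq.mp (Real.sin_int_mul_pi n)⟩

lemma cos_odd_int_mul_pi {n : ℤ} (hn : Odd n) : Real.cos ((n:ℝ) * π) = -1 := by
  obtain ⟨r, hr⟩ := hn
  rw [show ((n:ℝ)) * π = π + (r:ℤ) * (2 * π) by push_cast [hr]; ring,
    Real.cos_add_int_mul_two_pi, Real.cos_pi]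

lemma cos_even_int_mul_pi {n : ℤ} (hn : Even n) : Real.cos ((n:ℝ) * π) = 1 := by
  obtain ⟨r, hr⟩ := hn
  rw [show ((n:ℝ)) * π = (r:ℤ) * (2 * π) by push_cast [hr]; ring, Real.cos_int_mul_two_pi]

lemma rot_eps {θ : ℝ} (h0 : Real.sin θ = 0) (x : ℝ × ℝ) :
    rot θ x = (Real.cos θ * x.1, Real.cos θ * x.2) := by
  simp [rot, h0]

lemma term_eq (v A : ℝ × ℝ) (ε : ℝ) :
    dot2 v (Jpair A) - dot2 (v + A) (Jpair (ε * v.1, ε * v.2)) = (1 + ε) * dot2 v (Jpair A) := by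
  simp only [dot2, Jpair, Prod.fst_add, Prod.snd_add]
  ring

end Helpers2
section Helpers3

lemma ZD_add {d x y : ℝ} (hx : ∃ m : ℤ, x = m / d) (hy : ∃ m : ℤ, y = m / d) :
    ∃ m : ℤ, x + y = m / d := by
  obtain ⟨a, rfl⟩ := hx; obtain ⟨b, rfl⟩ := hy
  exact ⟨a + b, by push_cast; rw [add_div]⟩

lemma ZD_sub {d x y : ℝ} (hx : ∃ m : ℤ, x = m / d) (hy : ∃ m : ℤ, y = m / d) :
    ∃ m : ℤ, x - y = m / d := by
  obtain ⟨a, rfl⟩ := hx; obtain ⟨b, rfl⟩ := hy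
  exact ⟨a - b, by push_cast; rw [sub_div]⟩

lemma ZD_intmul {d x : ℝ} (n : ℤ) (hx : ∃ m : ℤ, x = m / d) :
    ∃ m : ℤ, (n : ℝ) * x = m / d := by
  obtain ⟨a, rfl⟩ := hx
  exact ⟨n * a, by push_cast; ring⟩

lemma ZD_half_to_k {k : ℕ} (hk : 0 < k) {x : ℝ} (hx : ∃ m : ℤ, x = m / 2) :
    ∃ m : ℤ, x = m / (2 * k) := by
  obtain ⟨a, rfl⟩ := hx
  refine ⟨a * k, ?_⟩
  have hk0 : (k : ℝ) ≠ 0 := Nat.cast_ne_zero.mpr hk.ne'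
  push_cast
  field_simp

/-- `⟨(a/d, b/d), J (A₁, A₂)⟩ = (a A₂ - b A₁)/d` for integer `a b A₁ A₂` -/
lemma dotJ_div (d : ℝ) (a b A₁ A₂ : ℤ) :
    dot2 ((a:ℝ)/d, (b:ℝ)/d) (Jpair ((A₁:ℝ), (A₂:ℝ))) = (↑(a * A₂ - b * A₁) : ℝ) / d := by
  simp only [dot2, Jpair]
  push_cast
  ring

end Helpers3
section Helpers4

lemma rot_cancel (θ : ℝ) (x : ℝ × ℝ) : rot θ (rot (-θ) x) = x := by
  rw [rot_rot, add_neg_cancel, rot_zero]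

lemma zcomb {d w X Y ε₀ ε₁ : ℝ} (hw : ∃ m : ℤ, w = m/d) (hX : ∃ m : ℤ, X = m/d)
    (hY : ∃ m : ℤ, Y = m/d) (h0 : ε₀ = 1 ∨ ε₀ = -1) (h1 : ε₁ = 1 ∨ ε₁ = -1) :
    ∃ m : ℤ, w + 1/2 * ((1 + ε₀) * X + (1 + ε₁) * Y) = m/d := by
  obtain ⟨aw, rfl⟩ := hw; obtain ⟨ax, rfl⟩ := hX; obtain ⟨ay, rfl⟩ := hY
  rcases h0 with rfl | rfl <;> rcases h1 with rfl | rfl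
  exacts [⟨aw + ax + ay, by push_cast; ring⟩, ⟨aw + ax, by push_cast; ring⟩,
    ⟨aw + ay, by push_cast; ring⟩, ⟨aw, by push_cast; ring⟩]

lemma zcomb_sub {d w X Y ε₀ ε₁ : ℝ} (hw : ∃ m : ℤ, w = m/d) (hX : ∃ m : ℤ, X = m/d)
    (hY : ∃ m : ℤ, Y = m/d) (h0 : ε₀ = 1 ∨ ε₀ = -1) (h1 : ε₁ = 1 ∨ ε₁ = -1) :
    ∃ m : ℤ, w - 1/2 * ((1 + ε₀) * X + (1 + ε₁) * Y) = m/d := by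
  obtain ⟨aw, rfl⟩ := hw; obtain ⟨ax, rfl⟩ := hX; obtain ⟨ay, rfl⟩ := hY
  rcases h0 with rfl | rfl <;> rcases h1 with rfl | rfl
  exacts [⟨aw - ax - ay, by push_cast; ring⟩, ⟨aw - ax, by push_cast; ring⟩,
    ⟨aw - ay, by push_cast; ring⟩, ⟨aw, by push_cast; ring⟩]

end Helpers4
section KeyLemma

lemma osc_norm_sub (p q k : ℕ) (hq : 0 < q) (hk : 0 < k) (hqodd : Odd q)
    (z : ℝ) (v : Fin 2 → ℝ × ℝ) (t : ℝ) (a₁ a₂ b₁ b₂ m : ℤ)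
    (hv0 : v 0 = ((a₁:ℝ)/2, (a₂:ℝ)/2)) (hv1 : v 1 = ((b₁:ℝ)/(2*k), (b₂:ℝ)/(2*k)))
    (hvodd : Odd p → ∃ n₃ n₄ : ℤ, v 1 = ((n₃:ℝ)/2, (n₄:ℝ)/2))
    (ht : t = m * ((q:ℝ) * Real.pi / 2)) :
    oscConj (lam2 p q) (z, v, t) '' LamO2 k (Real.pi * q) ⊆ LamO2 k (Real.pi * q) := by
  have hq0 : (q : ℝ) ≠ 0 := Nat.cast_ne_zero.mpr hq.ne'
  have hT0 : lam2 p q 0 * t = ((m * q : ℤ) : ℝ) * (Real.pi/2) := by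
    simp only [lam2, Matrix.cons_val_zero, ht]; push_cast; ring
  have hT1 : lam2 p q 1 * t = ((m * p : ℤ) : ℝ) * (Real.pi/2) := by
    simp only [lam2, Matrix.cons_val_one, Matrix.head_cons, ht]; push_cast; field_simp
  obtain ⟨ct, st, hct, hst⟩ := cs_int (m * q)
  obtain ⟨cu, su, hcu, hsu⟩ := cs_int (m * p)
  rw [← hT0] at hct hst
  rw [← hT1] at hcu hsu
  rintro x ⟨γ, hγ, rfl⟩
  obtain ⟨w, u, sγ⟩ := γ
  obtain ⟨⟨mw, hw⟩, hmidγ, ⟨cγ, hs⟩⟩ := hγ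
  obtain ⟨⟨u01, hu01⟩, ⟨u02, hu02⟩⟩ := hmidγ 0
  obtain ⟨⟨u11, hu11⟩, ⟨u12, hu12⟩⟩ := hmidγ 1
  simp only at hw hu01 hu02 hu11 hu12 hs
  have hu0 : u 0 = ((u01:ℝ), (u02:ℝ)) := Prod.ext hu01 hu02
  have hu1 : u 1 = ((u11:ℝ), (u12:ℝ)) := Prod.ext hu11 hu12
  have hA0 : rot (lam2 p q 0 * t) (u 0)
      = ((↑(ct*u01 - st*u02) : ℝ), (↑(st*u01 + ct*u02) : ℝ)) := by
    rw [hu0]; exact rot_int hct hst u01 u02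
  have hA1 : rot (lam2 p q 1 * t) (u 1)
      = ((↑(cu*u11 - su*u12) : ℝ), (↑(su*u11 + cu*u12) : ℝ)) := by
    rw [hu1]; exact rot_int hcu hsu u11 u12
  have hS0 : lam2 p q 0 * sγ = ((cγ * q : ℤ) : ℝ) * Real.pi := by
    simp only [lam2, Matrix.cons_val_zero, hs]; push_cast; ring
  have hS1 : lam2 p q 1 * sγ = ((cγ * p : ℤ) : ℝ) * Real.pi := by
    simp only [lam2, Matrix.cons_val_one, Matrix.head_cons, hs]; push_cast; field_simp
  have hsin0 : Real.sin (lam2 p q 0 * sγ) = 0 := by rw [hS0]; exact Real.sin_int_mul_pi _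
  have hsin1 : Real.sin (lam2 p q 1 * sγ) = 0 := by rw [hS1]; exact Real.sin_int_mul_pi _
  set ε₀ := Real.cos (lam2 p q 0 * sγ) with hε₀def
  set ε₁ := Real.cos (lam2 p q 1 * sγ) with hε₁def
  have heps0 : ε₀ = 1 ∨ ε₀ = -1 := by rw [hε₀def, hS0]; exact (eps_pi _).2
  have heps1 : ε₁ = 1 ∨ ε₁ = -1 := by rw [hε₁def, hS1]; exact (eps_pi _).2
  have heps1even : Even p → ε₁ = 1 := by
    intro hpe
    rw [hε₁def, hS1]
    exact cos_even_int_mul_pi (Even.mul_left (by exact_mod_cast hpe.natCast) _)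
  have hE0 : rot (lam2 p q 0 * sγ) (v 0) = (ε₀ * (v 0).1, ε₀ * (v 0).2) := rot_eps hsin0 _
  have hE1 : rot (lam2 p q 1 * sγ) (v 1) = (ε₁ * (v 1).1, ε₁ * (v 1).2) := rot_eps hsin1 _
  rw [oscConj_eq]
  refine ⟨?_, ?_, ⟨cγ, hs⟩⟩
  · show ∃ mm : ℤ, _ = (mm : ℝ) / (2 * k)
    simp only [Fin.sum_univ_two, hA0, hA1, hE0, hE1]
    rw [term_eq, term_eq]
    refine zcomb ⟨mw, hw⟩ ?_ ?_ heps0 heps1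
    · rw [hv0]
      exact ZD_half_to_k hk ⟨a₁ * (st*u01 + ct*u02) - a₂ * (ct*u01 - st*u02),
        dotJ_div 2 a₁ a₂ _ _⟩
    · rw [hv1]
      exact ⟨b₁ * (su*u11 + cu*u12) - b₂ * (cu*u11 - su*u12), dotJ_div (2*k) b₁ b₂ _ _⟩
  · have mem0 : (∃ a : ℤ, (v 0 + rot (lam2 p q 0 * t) (u 0) - rot (lam2 p q 0 * sγ) (v 0)).1 = (a:ℝ))
        ∧ ∃ b : ℤ, (v 0 + rot (lam2 p q 0 * t) (u 0) - rot (lam2 p q 0 * sγ) (v 0)).2 = (b:ℝ) := by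
      simp only [hA0, hE0, Prod.fst_add, Prod.snd_add, Prod.fst_sub, Prod.snd_sub]
      rcases heps0 with hε | hε
      · exact ⟨⟨ct*u01 - st*u02, by rw [hε]; push_cast; ring⟩,
          ⟨st*u01 + ct*u02, by rw [hε]; push_cast; ring⟩⟩
      · refine ⟨⟨ct*u01 - st*u02 + a₁, ?_⟩, ⟨st*u01 + ct*u02 + a₂, ?_⟩⟩
        · rw [hε, hv0]; push_cast; simp; ring
        · rw [hε, hv0]; push_cast; simp; ring
    have mem1 : (∃ a : ℤ, (v 1 + rot (lam2 p q 1 * t) (u 1) - rot (lam2 p q 1 * sγ) (v 1)).1 = (a:ℝ))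
        ∧ ∃ b : ℤ, (v 1 + rot (lam2 p q 1 * t) (u 1) - rot (lam2 p q 1 * sγ) (v 1)).2 = (b:ℝ) := by
      simp only [hA1, hE1, Prod.fst_add, Prod.snd_add, Prod.fst_sub, Prod.snd_sub]
      rcases Nat.even_or_odd p with hpe | hpo
      · rw [heps1even hpe]
        exact ⟨⟨cu*u11 - su*u12, by push_cast; ring⟩, ⟨su*u11 + cu*u12, by push_cast; ring⟩⟩
      · obtain ⟨c₃, c₄, hv1h⟩ := hvodd hpo
        rcases heps1 with hε | hε
        · exact ⟨⟨cu*u11 - su*u12, by rw [hε]; push_cast; ring⟩,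
            ⟨su*u11 + cu*u12, by rw [hε]; push_cast; ring⟩⟩
        · refine ⟨⟨cu*u11 - su*u12 + c₃, ?_⟩, ⟨su*u11 + cu*u12 + c₄, ?_⟩⟩
          · rw [hε, hv1h]; push_cast; simp; ring
          · rw [hε, hv1h]; push_cast; simp; ring
    intro i
    fin_cases i
    · exact mem0
    · exact mem1

lemma osc_norm_sup (p q k : ℕ) (hq : 0 < q) (hk : 0 < k) (hqodd : Odd q)
    (z : ℝ) (v : Fin 2 → ℝ × ℝ) (t : ℝ) (a₁ a₂ b₁ b₂ m : ℤ)
    (hv0 : v 0 = ((a₁:ℝ)/2, (a₂:ℝ)/2)) (hv1 : v 1 = ((b₁:ℝ)/(2*k), (b₂:ℝ)/(2*k)))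
    (hvodd : Odd p → ∃ n₃ n₄ : ℤ, v 1 = ((n₃:ℝ)/2, (n₄:ℝ)/2))
    (ht : t = m * ((q:ℝ) * Real.pi / 2)) :
    LamO2 k (Real.pi * q) ⊆ oscConj (lam2 p q) (z, v, t) '' LamO2 k (Real.pi * q) := by
  have hq0 : (q : ℝ) ≠ 0 := Nat.cast_ne_zero.mpr hq.ne'
  have hT0 : -(lam2 p q 0 * t) = ((-(m * q) : ℤ) : ℝ) * (Real.pi/2) := by
    simp only [lam2, Matrix.cons_val_zero, ht]; push_cast; ring
  have hT1 : -(lam2 p q 1 * t) = ((-(m * p) : ℤ) : ℝ) * (Real.pi/2) := by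
    simp only [lam2, Matrix.cons_val_one, Matrix.head_cons, ht]; push_cast; field_simp
  obtain ⟨ct, st, hct, hst⟩ := cs_int (-(m * q))
  obtain ⟨cu, su, hcu, hsu⟩ := cs_int (-(m * p))
  rw [← hT0] at hct hst
  rw [← hT1] at hcu hsu
  rintro ⟨w, u, sδ⟩ hδ
  obtain ⟨⟨mw, hw⟩, hmidδ, ⟨cδ, hs⟩⟩ := hδ
  obtain ⟨⟨u01, hu01⟩, ⟨u02, hu02⟩⟩ := hmidδ 0
  obtain ⟨⟨u11, hu11⟩, ⟨u12, hu12⟩⟩ := hmidδ 1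
  simp only at hw hu01 hu02 hu11 hu12 hs
  have hu0 : u 0 = ((u01:ℝ), (u02:ℝ)) := Prod.ext hu01 hu02
  have hu1 : u 1 = ((u11:ℝ), (u12:ℝ)) := Prod.ext hu11 hu12
  have hS0 : lam2 p q 0 * sδ = ((cδ * q : ℤ) : ℝ) * Real.pi := by
    simp only [lam2, Matrix.cons_val_zero, hs]; push_cast; ring
  have hS1 : lam2 p q 1 * sδ = ((cδ * p : ℤ) : ℝ) * Real.pi := by
    simp only [lam2, Matrix.cons_val_one, Matrix.head_cons, hs]; push_cast; field_simp
  have hsin0 : Real.sin (lam2 p q 0 * sδ) = 0 := by rw [hS0]; exact Real.sin_int_mul_pi _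
  have hsin1 : Real.sin (lam2 p q 1 * sδ) = 0 := by rw [hS1]; exact Real.sin_int_mul_pi _
  set ε₀ := Real.cos (lam2 p q 0 * sδ) with hε₀def
  set ε₁ := Real.cos (lam2 p q 1 * sδ) with hε₁def
  have heps0 : ε₀ = 1 ∨ ε₀ = -1 := by rw [hε₀def, hS0]; exact (eps_pi _).2
  have heps1 : ε₁ = 1 ∨ ε₁ = -1 := by rw [hε₁def, hS1]; exact (eps_pi _).2
  have heps1even : Even p → ε₁ = 1 := by
    intro hpe
    rw [hε₁def, hS1]
    exact cos_even_int_mul_pi (Even.mul_left (by exact_mod_cast hpe.natCast) _)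
  have hE0 : rot (lam2 p q 0 * sδ) (v 0) = (ε₀ * (v 0).1, ε₀ * (v 0).2) := rot_eps hsin0 _
  have hE1 : rot (lam2 p q 1 * sδ) (v 1) = (ε₁ * (v 1).1, ε₁ * (v 1).2) := rot_eps hsin1 _
  set X₀ : ℝ × ℝ := ((u 0).1 + (ε₀ - 1) * (v 0).1, (u 0).2 + (ε₀ - 1) * (v 0).2) with hX₀def
  set X₁ : ℝ × ℝ := ((u 1).1 + (ε₁ - 1) * (v 1).1, (u 1).2 + (ε₁ - 1) * (v 1).2) with hX₁def
  have hX0int : ∃ N₁ N₂ : ℤ, X₀ = ((N₁:ℝ), (N₂:ℝ)) := by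
    rcases heps0 with hε | hε
    · exact ⟨u01, u02, by rw [hX₀def, hε, hu01, hu02]; norm_num⟩
    · exact ⟨u01 - a₁, u02 - a₂, by
        rw [hX₀def, hε, hu01, hu02, hv0]; push_cast; norm_num; constructor <;> ring⟩
  have hX1int : ∃ N₁ N₂ : ℤ, X₁ = ((N₁:ℝ), (N₂:ℝ)) := by
    rcases Nat.even_or_odd p with hpe | hpo
    · exact ⟨u11, u12, by rw [hX₁def, heps1even hpe, hu11, hu12]; norm_num⟩
    · obtain ⟨c₃, c₄, hv1h⟩ := hvodd hpo
      rcases heps1 with hε | hε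
      · exact ⟨u11, u12, by rw [hX₁def, hε, hu11, hu12]; norm_num⟩
      · exact ⟨u11 - c₃, u12 - c₄, by
          rw [hX₁def, hε, hu11, hu12, hv1h]; push_cast; norm_num; constructor <;> ring⟩
  obtain ⟨N₁, N₂, hX₀⟩ := hX0int
  obtain ⟨N₃, N₄, hX₁⟩ := hX1int
  set F : ℝ := 1/2 * ((1 + ε₀) * dot2 (v 0) (Jpair X₀) + (1 + ε₁) * dot2 (v 1) (Jpair X₁))
    with hFdef
  refine ⟨(w - F, ![rot (-(lam2 p q 0 * t)) X₀, rot (-(lam2 p q 1 * t)) X₁], sδ),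
    ⟨?_, ?_, ⟨cδ, hs⟩⟩, ?_⟩
  · show ∃ mm : ℤ, w - F = (mm : ℝ) / (2 * ↑k)
    rw [hFdef]
    refine zcomb_sub ⟨mw, hw⟩ ?_ ?_ heps0 heps1
    · rw [hv0, hX₀]
      exact ZD_half_to_k hk ⟨a₁ * N₂ - a₂ * N₁, dotJ_div 2 a₁ a₂ _ _⟩
    · rw [hv1, hX₁]
      exact ⟨b₁ * N₄ - b₂ * N₃, dotJ_div (2*(k:ℝ)) b₁ b₂ _ _⟩
  · have mem0 : (∃ a : ℤ, (rot (-(lam2 p q 0 * t)) X₀).1 = (a:ℝ))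
        ∧ ∃ b : ℤ, (rot (-(lam2 p q 0 * t)) X₀).2 = (b:ℝ) := by
      rw [hX₀, rot_int hct hst]
      exact ⟨⟨_, rfl⟩, ⟨_, rfl⟩⟩
    have mem1 : (∃ a : ℤ, (rot (-(lam2 p q 1 * t)) X₁).1 = (a:ℝ))
        ∧ ∃ b : ℤ, (rot (-(lam2 p q 1 * t)) X₁).2 = (b:ℝ) := by
      rw [hX₁, rot_int hcu hsu]
      exact ⟨⟨_, rfl⟩, ⟨_, rfl⟩⟩
    intro i
    fin_cases i
    · exact mem0
    · exact mem1
  · rw [oscConj_eq]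
    have hmid0 : v 0 + rot (lam2 p q 0 * t) ((![rot (-(lam2 p q 0 * t)) X₀,
        rot (-(lam2 p q 1 * t)) X₁] : Fin 2 → ℝ × ℝ) 0) - rot (lam2 p q 0 * sδ) (v 0) = u 0 := by
      simp only [Matrix.cons_val_zero, rot_cancel, hE0, hX₀def]
      exact Prod.ext (by simp; ring) (by simp; ring)
    have hmid1 : v 1 + rot (lam2 p q 1 * t) ((![rot (-(lam2 p q 0 * t)) X₀,
        rot (-(lam2 p q 1 * t)) X₁] : Fin 2 → ℝ × ℝ) 1) - rot (lam2 p q 1 * sδ) (v 1) = u 1 := by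
      simp only [Matrix.cons_val_one, Matrix.head_cons, rot_cancel, hE1, hX₁def]
      exact Prod.ext (by simp [rot_cancel]; ring) (by simp [rot_cancel]; ring)
    refine Prod.ext ?_ (Prod.ext ?_ rfl)
    · show w - F + 1/2 * _ = w
      simp only [Fin.sum_univ_two, Matrix.cons_val_zero, Matrix.cons_val_one, Matrix.head_cons,
        rot_cancel, hE0, hE1]
      rw [term_eq, term_eq, hFdef, hX₀def, hX₁def]
      ring
    · show (fun i => _) = u
      funext i
      fin_cases i
      · exact hmid0
      · exact hmid1

end KeyLemma
lemma rot_zero_pair' (θ : ℝ) : rot θ ((0:ℝ), (0:ℝ)) = (0, 0) := by simp [rot]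

lemma osc_norm_key (p q k : ℕ) (hp : 0 < p) (hq : 0 < q) (hk : 0 < k)
    (hpq : Nat.Coprime p q) (hqodd : Odd q) (z : ℝ) (v : Fin 2 → ℝ × ℝ) (t : ℝ) :
    oscConj (lam2 p q) (z, v, t) '' LamO2 k (Real.pi * q) = LamO2 k (Real.pi * q) ↔
      ((∃ m₁ m₂ : ℤ, v 0 = ((m₁:ℝ)/2, (m₂:ℝ)/2)) ∧
       (∃ m₃ m₄ : ℤ, v 1 = ((m₃:ℝ)/(2*k), (m₄:ℝ)/(2*k))) ∧
       (Odd p → ∃ n₃ n₄ : ℤ, v 1 = ((n₃:ℝ)/2, (n₄:ℝ)/2)) ∧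
       (∃ m : ℤ, t = m * ((q:ℝ) * Real.pi / 2))) := by
  have hq0 : (q : ℝ) ≠ 0 := Nat.cast_ne_zero.mpr hq.ne'
  constructor
  · intro himg
    have hsub : ∀ γ ∈ LamO2 k (Real.pi * q),
        oscConj (lam2 p q) (z, v, t) γ ∈ LamO2 k (Real.pi * q) :=
      fun γ hγ => himg ▸ Set.mem_image_of_mem _ hγ
    -- integer entries of R(t)
    have memB0 : ((0 : ℝ), ![((1:ℝ),(0:ℝ)), ((0:ℝ),(0:ℝ))], (0:ℝ)) ∈ LamO2 k (Real.pi * q) := by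
      refine ⟨⟨0, by norm_num⟩, ?_, ⟨0, by norm_num⟩⟩
      intro i; fin_cases i
      · exact ⟨⟨1, by norm_num⟩, ⟨0, by norm_num⟩⟩
      · exact ⟨⟨0, by norm_num⟩, ⟨0, by norm_num⟩⟩
    obtain ⟨a, b, hca, hsa⟩ : ∃ a b : ℤ, Real.cos t = a ∧ Real.sin t = b := by
      obtain ⟨-, hmid, -⟩ := hsub _ memB0
      obtain ⟨⟨a, ha⟩, ⟨b, hb⟩⟩ := hmid 0
      rw [oscConj_eq] at ha hb
      simp only [lam2, Matrix.cons_val_zero, Matrix.cons_val_one, Matrix.head_cons, one_mul,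
        mul_zero, mul_one, rot, dot2, Jpair, Real.cos_zero, Real.sin_zero, Prod.fst_add,
        Prod.snd_add, Prod.fst_sub, Prod.snd_sub] at ha hb
      exact ⟨a, b, by linear_combination ha, by linear_combination hb⟩
    have memB1 : ((0 : ℝ), ![((0:ℝ),(0:ℝ)), ((1:ℝ),(0:ℝ))], (0:ℝ)) ∈ LamO2 k (Real.pi * q) := by
      refine ⟨⟨0, by norm_num⟩, ?_, ⟨0, by norm_num⟩⟩
      intro i; fin_cases i
      · exact ⟨⟨0, by norm_num⟩, ⟨0, by norm_num⟩⟩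
      · exact ⟨⟨1, by norm_num⟩, ⟨0, by norm_num⟩⟩
    have memB2 : ((0 : ℝ), ![((0:ℝ),(0:ℝ)), ((0:ℝ),(1:ℝ))], (0:ℝ)) ∈ LamO2 k (Real.pi * q) := by
      refine ⟨⟨0, by norm_num⟩, ?_, ⟨0, by norm_num⟩⟩
      intro i; fin_cases i
      · exact ⟨⟨0, by norm_num⟩, ⟨0, by norm_num⟩⟩
      · exact ⟨⟨0, by norm_num⟩, ⟨1, by norm_num⟩⟩
    obtain ⟨c, s, hcc, hsc⟩ :
        ∃ c s : ℤ, Real.cos ((p/q : ℝ) * t) = c ∧ Real.sin ((p/q : ℝ) * t) = s := by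
      obtain ⟨-, hmid, -⟩ := hsub _ memB1
      obtain ⟨⟨c, hc⟩, ⟨s, hs⟩⟩ := hmid 1
      rw [oscConj_eq] at hc hs
      simp only [lam2, Matrix.cons_val_zero, Matrix.cons_val_one, Matrix.head_cons, one_mul,
        mul_zero, mul_one, rot, dot2, Jpair, Real.cos_zero, Real.sin_zero, Prod.fst_add,
        Prod.snd_add, Prod.fst_sub, Prod.snd_sub] at hc hs
      exact ⟨c, s, by linear_combination hc, by linear_combination hs⟩
    -- the time coordinate
    have hT : ∃ m : ℤ, t = m * ((q : ℝ) * Real.pi / 2) := by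
      obtain ⟨m₀, hm₀⟩ := eq_int_mul_pi_div_two a b hca hsa
      obtain ⟨n₀, hn₀⟩ := eq_int_mul_pi_div_two c s hcc hsc
      rw [hm₀] at hn₀
      have hcastq : (p : ℝ) * m₀ = (n₀ : ℝ) * q := by
        field_simp at hn₀
        nlinarith [hn₀, Real.pi_pos]
      have hZ : (p : ℤ) * m₀ = n₀ * q := by exact_mod_cast hcastq
      have hco : IsCoprime (q : ℤ) (p : ℤ) := by
        rw [Int.isCoprime_iff_gcd_eq_one, Int.gcd_natCast_natCast]
        exact hpq.symm
      have hdvd : (q : ℤ) ∣ m₀ := by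
        refine hco.dvd_of_dvd_mul_right ⟨n₀, ?_⟩
        linarith [hZ]
      obtain ⟨m, rfl⟩ := hdvd
      exact ⟨m, by rw [hm₀]; push_cast; ring⟩
    -- v 0 is half-integral, and v 1 too when p is odd
    have memA : ((0 : ℝ), ![((0:ℝ),(0:ℝ)), ((0:ℝ),(0:ℝ))], Real.pi * q) ∈ LamO2 k (Real.pi * q) := by
      refine ⟨⟨0, by norm_num⟩, ?_, ⟨1, by norm_num⟩⟩
      intro i; fin_cases i <;> exact ⟨⟨0, by norm_num⟩, ⟨0, by norm_num⟩⟩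
    have hA0ang : lam2 p q 0 * (Real.pi * q) = ((q:ℤ):ℝ) * Real.pi := by
      simp [lam2]; ring
    have hA1ang : lam2 p q 1 * (Real.pi * q) = ((p:ℤ):ℝ) * Real.pi := by
      simp only [lam2, Matrix.cons_val_one, Matrix.head_cons]; push_cast; field_simp
    have hrotA0 : rot (lam2 p q 0 * (Real.pi * q)) (v 0) = (-(v 0).1, -(v 0).2) := by
      rw [hA0ang, rot_eps (Real.sin_int_mul_pi q),
        cos_odd_int_mul_pi ((Int.odd_coe_nat q).mpr hqodd)]
      exact Prod.ext (by ring) (by ring)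
    have hv0 : ∃ m₁ m₂ : ℤ, v 0 = ((m₁:ℝ)/2, (m₂:ℝ)/2) := by
      obtain ⟨-, hmid, -⟩ := hsub _ memA
      obtain ⟨⟨a', ha⟩, ⟨b', hb⟩⟩ := hmid 0
      rw [oscConj_eq] at ha hb
      simp only [Matrix.cons_val_zero, rot_zero_pair', hrotA0, Prod.fst_add, Prod.snd_add,
        Prod.fst_sub, Prod.snd_sub] at ha hb
      exact ⟨a', b', Prod.ext (by simp at ha ⊢; linarith) (by simp at hb ⊢; linarith)⟩
    have hvodd : Odd p → ∃ m₁ m₂ : ℤ, v 1 = ((m₁:ℝ)/2, (m₂:ℝ)/2) := by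
      intro hpodd
      have hrotA1 : rot (lam2 p q 1 * (Real.pi * q)) (v 1) = (-(v 1).1, -(v 1).2) := by
        rw [hA1ang, rot_eps (Real.sin_int_mul_pi p),
          cos_odd_int_mul_pi ((Int.odd_coe_nat p).mpr hpodd)]
        exact Prod.ext (by ring) (by ring)
      obtain ⟨-, hmid, -⟩ := hsub _ memA
      obtain ⟨⟨a', ha⟩, ⟨b', hb⟩⟩ := hmid 1
      rw [oscConj_eq] at ha hb
      simp only [Matrix.cons_val_one, Matrix.head_cons, rot_zero_pair', hrotA1, Prod.fst_add,
        Prod.snd_add, Prod.fst_sub, Prod.snd_sub] at ha hb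
      exact ⟨a', b', Prod.ext (by simp [rot_zero_pair'] at ha ⊢; linarith) (by simp [rot_zero_pair'] at hb ⊢; linarith)⟩
    -- v 1 lies in the (1/2k)-lattice
    have hv1 : ∃ m₃ m₄ : ℤ, v 1 = ((m₃:ℝ)/(2*k), (m₄:ℝ)/(2*k)) := by
      have hpyt : (c:ℝ)^2 + (s:ℝ)^2 = 1 := by
        rw [← hcc, ← hsc]; exact Real.cos_sq_add_sin_sq _
      obtain ⟨⟨M₁, hM1⟩, -, -⟩ := hsub _ memB1
      obtain ⟨⟨M₂, hM2⟩, -, -⟩ := hsub _ memB2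
      rw [oscConj_eq] at hM1 hM2
      simp only [Fin.sum_univ_two, lam2, Matrix.cons_val_zero, Matrix.cons_val_one,
        Matrix.head_cons, one_mul, mul_zero, mul_one, rot, dot2, Jpair, Real.cos_zero,
        Real.sin_zero, Prod.fst_add, Prod.snd_add, hcc, hsc] at hM1 hM2
      refine ⟨s*M₁ + c*M₂, -(c*M₁) + s*M₂, Prod.ext ?_ ?_⟩
      · show (v 1).1 = _
        push_cast
        linear_combination (s:ℝ) * hM1 + (c:ℝ) * hM2 - (v 1).1 * hpyt
      · show (v 1).2 = _
        push_cast
        linear_combination -(c:ℝ) * hM1 + (s:ℝ) * hM2 - (v 1).2 * hpyt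
    exact ⟨hv0, hv1, hvodd, hT⟩
  · rintro ⟨⟨a₁, a₂, hv0⟩, ⟨b₁, b₂, hv1⟩, hvodd, ⟨m, ht⟩⟩
    exact Set.Subset.antisymm
      (osc_norm_sub p q k hq hk hqodd z v t a₁ a₂ b₁ b₂ m hv0 hv1 hvodd ht)
      (osc_norm_sup p q k hq hk hqodd z v t a₁ a₂ b₁ b₂ m hv0 hv1 hvodd ht)
/-- The normalizer of the lattice `Λ_{k,q,2} = (1/(2k))ℤ × ℤ⁴ × πqℤ` in
`Osc₂(1, p/q)` (with `q` odd) is `ℝ × (1/2)ℤ² × (1/(2k))ℤ² × (qπ/2)ℤ` when `p`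
is even, and `ℝ × (1/2)ℤ⁴ × (qπ/2)ℤ` when `p` is odd. -/
theorem stmt_18 (p q k : ℕ) (hp : 0 < p) (hq : 0 < q) (hk : 0 < k)
    (hpq : Nat.Coprime p q) (hqodd : Odd q) (g : OscG 2) :
    (Even p →
      (oscConj (lam2 p q) g '' LamO2 k (Real.pi * q) = LamO2 k (Real.pi * q) ↔
        ((∃ m₁ m₂ : ℤ, g.2.1 0 = ((m₁ : ℝ) / 2, (m₂ : ℝ) / 2))
          ∧ (∃ m₃ m₄ : ℤ, g.2.1 1 = ((m₃ : ℝ) / (2 * k), (m₄ : ℝ) / (2 * k)))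
          ∧ ∃ m : ℤ, g.2.2 = m * (q * Real.pi / 2))))
    ∧ (Odd p →
      (oscConj (lam2 p q) g '' LamO2 k (Real.pi * q) = LamO2 k (Real.pi * q) ↔
        ((∃ m₁ m₂ : ℤ, g.2.1 0 = ((m₁ : ℝ) / 2, (m₂ : ℝ) / 2))
          ∧ (∃ m₃ m₄ : ℤ, g.2.1 1 = ((m₃ : ℝ) / 2, (m₄ : ℝ) / 2))
          ∧ ∃ m : ℤ, g.2.2 = m * (q * Real.pi / 2)))) := by
  obtain ⟨z, v, t⟩ := g
  have hkey := osc_norm_key p q k hp hq hk hpq hqodd z v t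
  have hk0 : (k : ℝ) ≠ 0 := Nat.cast_ne_zero.mpr hk.ne'
  constructor
  · intro hpe
    rw [hkey]
    constructor
    · rintro ⟨h0, h1, -, h3⟩
      exact ⟨h0, h1, h3⟩
    · rintro ⟨h0, h1, h3⟩
      exact ⟨h0, h1, fun hpo => ((Nat.not_odd_iff_even.mpr hpe) hpo).elim, h3⟩
  · intro hpo
    rw [hkey]
    constructor
    · rintro ⟨h0, -, h2, h3⟩
      exact ⟨h0, h2 hpo, h3⟩
    · rintro ⟨h0, ⟨n₃, n₄, h2⟩, h3⟩
      refine ⟨h0, ⟨n₃ * k, n₄ * k, ?_⟩, fun _ => ⟨n₃, n₄, h2⟩, h3⟩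
      have h2' : v 1 = ((n₃:ℝ)/2, (n₄:ℝ)/2) := h2
      rw [h2']
      refine Prod.ext ?_ ?_ <;> · push_cast; field_simp
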